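/- Let H be a 3-uniform hypergraph containing no linear path of length s + 1, and let P = (x₀, x₁, ..., x_{2s}) be a linear path of length s in H. Then for each i ∈ {0, 1, 2s−1, 2s}, every edge e of H with x_i ∈ e satisfies |e ∩ {x₀, x₁, ..., x_{2s}}| ≥ 2. -/
import Mathlib


/-- The degree of a vertex `v` in a hypergraph with edge set `E`:
the number of edges containing `v`. -/
def hdegree {V : Type*} [DecidableEq V] (E : Finset (Finset V)) (v : V) : ℕ :=
  (E.filter (fun e => v ∈ e)).card

/-- The hypergraph with edge set `E` contains a linear path of length `k`:
a collection of `k` (distinct) edges `e₁, …, e_k` such that `|eᵢ ∩ e_j| = 1`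
if `|i - j| = 1` and `eᵢ ∩ e_j = ∅` otherwise. -/
def HasLinearPath {V : Type*} [DecidableEq V] (E : Finset (Finset V)) (k : ℕ) : Prop :=
  ∃ f : Fin k → Finset V, Function.Injective f ∧ (∀ i, f i ∈ E) ∧
    ∀ i j : Fin k, i ≠ j →
      (((i : ℕ) + 1 = j ∨ (j : ℕ) + 1 = i) → (f i ∩ f j).card = 1) ∧
      (¬((i : ℕ) + 1 = j ∨ (j : ℕ) + 1 = i) → f i ∩ f j = ∅)

/-- `x = (x₀, x₁, …, x_{2t})` is a linear path of length `t` in the hypergraph with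
edge set `E`: the `2t+1` vertices are distinct and `{x_{2i}, x_{2i+1}, x_{2i+2}} ∈ E`
for each `i ∈ [0, t-1]`. -/
def IsLinearPathSeq {V : Type*} [DecidableEq V] (E : Finset (Finset V)) (t : ℕ)
    (x : Fin (2 * t + 1) → V) : Prop :=
  Function.Injective x ∧
  ∀ i : Fin t,
    ({x ⟨2 * i, by have := i.isLt; omega⟩,
      x ⟨2 * i + 1, by have := i.isLt; omega⟩,
      x ⟨2 * i + 2, by have := i.isLt; omega⟩} : Finset V) ∈ E

/-- `dP E x a b` is the number of vertices `y` outside the path `x` such that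
`{x_a, x_b, y}` is an edge; this is `d_P(a, b)` in the paper. -/
def dP {V : Type*} [Fintype V] [DecidableEq V] (E : Finset (Finset V)) {t : ℕ}
    (x : Fin (2 * t + 1) → V) (a b : Fin (2 * t + 1)) : ℕ :=
  (Finset.univ.filter
    (fun y => (∀ i, y ≠ x i) ∧ ({x a, x b, y} : Finset V) ∈ E)).card

/-- The function `g(n,t)` from the paper:
`g(n,t) = ((t-1)/2)n + (3/2)t² - (9/2)t + 6` for odd `t`, and
`g(n,t) = ((t-2)/2)n + (3/2)t² - (5/2)t + 6` for even `t`. -/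
def gQ (n t : ℕ) : ℚ :=
  if Odd t then ((t : ℚ) - 1) / 2 * n + 3 / 2 * t ^ 2 - 9 / 2 * t + 6
  else ((t : ℚ) - 2) / 2 * n + 3 / 2 * t ^ 2 - 5 / 2 * t + 6

/-- If a hypergraph contains a "path" of `s` triples `T 0, …, T (s-1)` and an edge `e`
meeting `T 0` in exactly one vertex and disjoint from all the other `T j`, then the
hypergraph contains a linear path of length `s + 1`. -/
lemma extend_path_aux {V : Type*} [DecidableEq V] {E : Finset (Finset V)} {s : ℕ}
    (hE : ∀ e ∈ E, e.card = 3)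
    (T : Fin s → Finset V) (hT : ∀ j, T j ∈ E)
    (hadj : ∀ j k : Fin s, (j : ℕ) + 1 = (k : ℕ) → (T j ∩ T k).card = 1)
    (hfar : ∀ j k : Fin s, (j : ℕ) + 1 < (k : ℕ) → T j ∩ T k = ∅)
    (e : Finset V) (he : e ∈ E) (hs : 0 < s)
    (h0 : (e ∩ T ⟨0, hs⟩).card = 1)
    (hrest : ∀ j : Fin s, (j : ℕ) ≠ 0 → e ∩ T j = ∅) :
    HasLinearPath E (s + 1) := by
  classical
  set g : Fin (s + 1) → Finset V :=
    fun k => if h : (k : ℕ) = 0 then e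
      else T ⟨(k : ℕ) - 1, by have := k.isLt; omega⟩ with hgdef
  have hg0 : ∀ k : Fin (s + 1), (k : ℕ) = 0 → g k = e := by
    intro k hk
    simp only [hgdef]
    rw [dif_pos hk]
  have hgpos : ∀ (k : Fin (s + 1)) (m : ℕ) (hm : m < s), (k : ℕ) = m + 1 → g k = T ⟨m, hm⟩ := by
    intro k m hm hk
    simp only [hgdef]
    rw [dif_neg (by omega)]
    congr 1
    exact Fin.ext (show (k : ℕ) - 1 = m by omega)
  have hgE : ∀ k : Fin (s + 1), g k ∈ E := by
    intro k
    by_cases hk : (k : ℕ) = 0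
    · rw [hg0 k hk]; exact he
    · rw [hgpos k ((k : ℕ) - 1) (by have := k.isLt; omega) (by omega)]; exact hT _
  have hcard : ∀ k, (g k).card = 3 := fun k => hE _ (hgE k)
  have main : ∀ a b : Fin (s + 1), (a : ℕ) < (b : ℕ) →
      (((a : ℕ) + 1 = (b : ℕ) → (g a ∩ g b).card = 1) ∧
       ((a : ℕ) + 1 ≠ (b : ℕ) → g a ∩ g b = ∅)) := by
    intro a b hab
    have hbs := b.isLt
    by_cases ha : (a : ℕ) = 0
    · rw [hg0 a ha]
      constructor
      · intro h1
        rw [hgpos b 0 hs (by omega)]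
        exact h0
      · intro h1
        rw [hgpos b ((b : ℕ) - 1) (by omega) (by omega)]
        exact hrest _ (show (b : ℕ) - 1 ≠ 0 by omega)
    · rw [hgpos a ((a : ℕ) - 1) (by have := a.isLt; omega) (by omega),
          hgpos b ((b : ℕ) - 1) (by omega) (by omega)]
      constructor
      · intro h1
        exact hadj _ _ (show (a : ℕ) - 1 + 1 = (b : ℕ) - 1 by omega)
      · intro h1
        exact hfar _ _ (show (a : ℕ) - 1 + 1 < (b : ℕ) - 1 by omega)
  have hne : ∀ a b : Fin (s + 1), (a : ℕ) < (b : ℕ) → g a ≠ g b := by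
    intro a b hab heq
    by_cases h1 : (a : ℕ) + 1 = (b : ℕ)
    · have h2 := (main a b hab).1 h1
      rw [heq, Finset.inter_self] at h2
      have := hcard b
      omega
    · have h2 := (main a b hab).2 h1
      rw [heq, Finset.inter_self] at h2
      have h3 := hcard b
      rw [h2, Finset.card_empty] at h3
      omega
  refine ⟨g, ?_, hgE, ?_⟩
  · intro a b hab
    by_contra hne'
    have hv : (a : ℕ) ≠ (b : ℕ) := fun h => hne' (Fin.ext h)
    rcases Nat.lt_or_ge (a : ℕ) (b : ℕ) with h | h
    · exact hne a b h hab
    · exact hne b a (by omega) hab.symm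
  · intro a b hab'
    have hv : (a : ℕ) ≠ (b : ℕ) := fun h => hab' (Fin.ext h)
    rcases Nat.lt_or_ge (a : ℕ) (b : ℕ) with h | h
    · exact ⟨fun hc => (main a b h).1 (by omega), fun hc => (main a b h).2 (by omega)⟩
    · have h' : (b : ℕ) < (a : ℕ) := by omega
      refine ⟨fun hc => ?_, fun hc => ?_⟩
      · rw [Finset.inter_comm]; exact (main b a h').1 (by omega)
      · rw [Finset.inter_comm]; exact (main b a h').2 (by omega)

theorem edge_through_near_endpoint_meets_path_twice
    (s : ℕ)
    (V : Type*) [Fintype V] [DecidableEq V]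
    (E : Finset (Finset V)) (hE : ∀ e ∈ E, e.card = 3)
    (hfree : ¬ HasLinearPath E (s + 1))
    (x : Fin (2 * s + 1) → V) (hx : IsLinearPathSeq E s x) :
    ∀ i : Fin (2 * s + 1),
      ((i : ℕ) = 0 ∨ (i : ℕ) = 1 ∨ (i : ℕ) = 2 * s - 1 ∨ (i : ℕ) = 2 * s) →
      ∀ e ∈ E, x i ∈ e → 2 ≤ (e ∩ Finset.univ.image x).card := by
  classical
  obtain ⟨hinj, hedges⟩ := hx
  intro i hi e he hxe
  by_contra hlt
  push_neg at hlt
  rcases Nat.eq_zero_or_pos s with hs0 | hs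
  · subst hs0
    refine hfree ⟨fun _ => e, ?_, fun _ => he, ?_⟩
    · intro a b _
      exact Fin.ext (by omega)
    · intro a b hab
      exact absurd (Fin.ext (by omega)) hab
  have hx2 : ∀ (a b : ℕ) (ha : a < 2 * s + 1) (hb : b < 2 * s + 1),
      x ⟨a, ha⟩ = x ⟨b, hb⟩ → a = b := by
    intro a b ha hb h
    have h2 := hinj h
    rw [Fin.mk.injEq] at h2
    exact h2
  have hone : x i ∈ e ∩ Finset.univ.image x :=
    Finset.mem_inter.mpr ⟨hxe, Finset.mem_image.mpr ⟨i, Finset.mem_univ i, rfl⟩⟩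
  have hsingle : e ∩ Finset.univ.image x = {x i} := by
    refine Finset.eq_singleton_iff_unique_mem.mpr ⟨hone, ?_⟩
    intro v hv
    by_contra hvne
    have h2 : 1 < (e ∩ Finset.univ.image x).card :=
      Finset.one_lt_card.mpr ⟨v, hv, x i, hone, hvne⟩
    omega
  have hkey : ∀ (n : ℕ) (hn : n < 2 * s + 1), (x ⟨n, hn⟩ ∈ e ↔ n = (i : ℕ)) := by
    intro n hn
    constructor
    · intro hne
      have hmem : x ⟨n, hn⟩ ∈ e ∩ Finset.univ.image x :=
        Finset.mem_inter.mpr ⟨hne, Finset.mem_image.mpr ⟨_, Finset.mem_univ _, rfl⟩⟩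
      rw [hsingle, Finset.mem_singleton] at hmem
      exact congrArg Fin.val (hinj hmem)
    · intro h
      subst h
      have hieq : (⟨(i : ℕ), hn⟩ : Fin (2 * s + 1)) = i := Fin.ext rfl
      rw [hieq]
      exact hxe
  set T : ℕ → Finset V := fun j =>
    if h : j < s then
      ({x ⟨2 * j, by omega⟩, x ⟨2 * j + 1, by omega⟩, x ⟨2 * j + 2, by omega⟩} : Finset V)
    else ∅ with hTdef'
  have hTdef : ∀ (j : ℕ) (h : j < s),
      T j = ({x ⟨2 * j, by omega⟩, x ⟨2 * j + 1, by omega⟩,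
        x ⟨2 * j + 2, by omega⟩} : Finset V) := by
    intro j h
    simp only [hTdef']
    rw [dif_pos h]
  have hTE : ∀ (j : ℕ), j < s → T j ∈ E := by
    intro j h
    rw [hTdef j h]
    exact hedges ⟨j, h⟩
  have hadjN : ∀ a b : ℕ, b < s → a + 1 = b → (T a ∩ T b).card = 1 := by
    intro a b hb hab
    have ha : a < s := by omega
    rw [hTdef a ha, hTdef b hb]
    have heq : ({x ⟨2 * a, by omega⟩, x ⟨2 * a + 1, by omega⟩,
          x ⟨2 * a + 2, by omega⟩} : Finset V) ∩
        ({x ⟨2 * b, by omega⟩, x ⟨2 * b + 1, by omega⟩,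
          x ⟨2 * b + 2, by omega⟩} : Finset V) =
        ({x ⟨2 * a + 2, by omega⟩} : Finset V) := by
      ext v
      simp only [Finset.mem_inter, Finset.mem_insert, Finset.mem_singleton]
      constructor
      · rintro ⟨h1 | h1 | h1, h2 | h2 | h2⟩ <;> subst h1 <;>
          first
            | rfl
            | exact absurd (hx2 _ _ _ _ h2) (by omega)
      · intro h
        subst h
        refine ⟨Or.inr (Or.inr rfl), Or.inl ?_⟩
        exact congrArg x (Fin.ext (show 2 * a + 2 = 2 * b by omega))
    rw [heq, Finset.card_singleton]
  have hfarN : ∀ a b : ℕ, b < s → a + 1 < b → T a ∩ T b = ∅ := by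
    intro a b hb hab
    have ha : a < s := by omega
    rw [hTdef a ha, hTdef b hb]
    apply Finset.eq_empty_iff_forall_notMem.mpr
    intro v hv
    simp only [Finset.mem_inter, Finset.mem_insert, Finset.mem_singleton] at hv
    obtain ⟨h1 | h1 | h1, h2 | h2 | h2⟩ := hv <;> subst h1 <;>
      exact absurd (hx2 _ _ _ _ h2) (by omega)
  have hin : ∀ j : ℕ, j < s → 2 * j ≤ (i : ℕ) → (i : ℕ) ≤ 2 * j + 2 → e ∩ T j = {x i} := by
    intro j hj hj1 hj2
    rw [hTdef j hj]
    ext v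
    simp only [Finset.mem_inter, Finset.mem_insert, Finset.mem_singleton]
    constructor
    · rintro ⟨hve, h1 | h1 | h1⟩ <;> subst h1 <;>
        exact congrArg x (Fin.ext ((hkey _ _).mp hve))
    · intro h
      subst h
      refine ⟨hxe, ?_⟩
      have hcase : (i : ℕ) = 2 * j ∨ (i : ℕ) = 2 * j + 1 ∨ (i : ℕ) = 2 * j + 2 := by omega
      rcases hcase with h | h | h
      · exact Or.inl (congrArg x (Fin.ext h))
      · exact Or.inr (Or.inl (congrArg x (Fin.ext h)))
      · exact Or.inr (Or.inr (congrArg x (Fin.ext h)))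
  have hout : ∀ j : ℕ, j < s → ((i : ℕ) < 2 * j ∨ 2 * j + 2 < (i : ℕ)) → e ∩ T j = ∅ := by
    intro j hj hc
    rw [hTdef j hj]
    apply Finset.eq_empty_iff_forall_notMem.mpr
    intro v hv
    simp only [Finset.mem_inter, Finset.mem_insert, Finset.mem_singleton] at hv
    obtain ⟨hve, h1 | h1 | h1⟩ := hv <;> subst h1 <;>
      exact absurd ((hkey _ _).mp hve) (by omega)
  have hilt := i.isLt
  have hAB : (i : ℕ) ≤ 1 ∨ 2 * s - 1 ≤ (i : ℕ) := by omega
  rcases hAB with hA | hB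
  · refine hfree (extend_path_aux hE (fun j : Fin s => T (j : ℕ)) (fun j => hTE _ j.isLt)
      (fun j k h => hadjN _ _ k.isLt h) (fun j k h => hfarN _ _ k.isLt h) e he hs ?_ ?_)
    · show (e ∩ T 0).card = 1
      rw [hin 0 hs (by omega) (by omega), Finset.card_singleton]
    · intro j hj
      exact hout _ j.isLt (Or.inl (by omega))
  · refine hfree (extend_path_aux hE (fun j : Fin s => T (s - 1 - (j : ℕ)))
      (fun j => hTE _ (by have := j.isLt; omega)) ?_ ?_ e he hs ?_ ?_)
    · intro j k h
      have hjs := j.isLt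
      have hks := k.isLt
      rw [Finset.inter_comm]
      exact hadjN _ _ (by omega) (by omega)
    · intro j k h
      have hjs := j.isLt
      have hks := k.isLt
      rw [Finset.inter_comm]
      exact hfarN _ _ (by omega) (by omega)
    · show (e ∩ T (s - 1)).card = 1
      rw [hin (s - 1) (by omega) (by omega) (by omega), Finset.card_singleton]
    · intro j hj
      have hjs := j.isLt
      exact hout _ (by omega) (Or.inr (by omega))
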